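/- Smoothness of the efficient score in the threshold a (case d = d'): for all thresholds a, ā ∈ ℝ and d ∈ {0,1}, ‖ ((1{D=d}/p_d(X))(Y_a − G_a(d,X)) + G_a(d,X)) − ((1{D=d}/p_d(X))(Y_ā − G_ā(d,X)) + G_ā(d,X)) ‖_{P,2} ≤ ( 1/ε₁ + (1+ε₁)/ε₁ ) · ‖Y_a − Y_ā‖_{P,2}, where G_a(D,X) is a version of P(Y ≤ a | D, X). -/

import Mathlib

open MeasureTheory ENNReal

private lemma sq_ofReal_rpow_half {c k : ℝ} (hk : 0 ≤ k) (h : c ≤ k ^ 2) :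
    (ENNReal.ofReal c) ^ (1/2 : ℝ) ≤ ENNReal.ofReal k := by
  have h1 : ENNReal.ofReal c ≤ (ENNReal.ofReal k) ^ (2:ℕ) := by
    rw [← ENNReal.ofReal_pow hk]
    exact ENNReal.ofReal_le_ofReal h
  calc (ENNReal.ofReal c) ^ (1/2:ℝ) ≤ ((ENNReal.ofReal k) ^ (2:ℕ)) ^ (1/2:ℝ) :=
        ENNReal.rpow_le_rpow (by exact_mod_cast h1) (by norm_num)
    _ = ENNReal.ofReal k := by
        rw [← ENNReal.rpow_natCast, ← ENNReal.rpow_mul]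
        norm_num

private lemma eLpNorm_two_eq {Ω : Type*} [MeasurableSpace Ω] {P : Measure Ω}
    {g : Ω → ℝ} (hg : Integrable (fun ω => g ω ^ 2) P) :
    eLpNorm g 2 P = (ENNReal.ofReal (∫ ω, g ω ^ 2 ∂P)) ^ (1/2 : ℝ) := by
  rw [eLpNorm_eq_lintegral_rpow_enorm_toReal two_ne_zero ENNReal.ofNat_ne_top]
  have h2 : (2:ℝ≥0∞).toReal = 2 := by simp
  rw [h2]
  have hpt : ∀ ω, ‖g ω‖ₑ ^ (2:ℝ) = ENNReal.ofReal (g ω ^ 2) := by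
    intro ω
    rw [← ofReal_norm,
      ENNReal.ofReal_rpow_of_nonneg (norm_nonneg _) (by norm_num : (0:ℝ) ≤ 2)]
    congr 1
    rw [Real.norm_eq_abs, show (2:ℝ) = ((2:ℕ):ℝ) by norm_num, Real.rpow_natCast, sq_abs]
  rw [lintegral_congr hpt, ← ofReal_integral_eq_lintegral_ofReal hg
    (Filter.Eventually.of_forall fun ω => sq_nonneg _)]

private lemma pullout {Ω 𝓧 : Type*} [MeasurableSpace Ω] [MeasurableSpace 𝓧]
    {P : Measure Ω} [IsProbabilityMeasure P]
    {X : Ω → 𝓧} (hX : Measurable X) {w : 𝓧 → ℝ} (hw : Measurable w)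
    {ι : Ω → ℝ} (hι : Measurable ι) (hι0 : ∀ ω, 0 ≤ ι ω) (hι1 : ∀ ω, ι ω ≤ 1)
    (hver : (fun ω => w (X ω)) =ᵐ[P] P[ι | MeasurableSpace.comap X inferInstance])
    (hw0 : ∀ᵐ ω ∂P, 0 ≤ w (X ω)) :
    ∀ h : 𝓧 → ℝ≥0∞, Measurable h →
    ∫⁻ ω, h (X ω) * ENNReal.ofReal (w (X ω)) ∂P
      = ∫⁻ ω, h (X ω) * ENNReal.ofReal (ι ω) ∂P := by
  have hm : MeasurableSpace.comap X inferInstance ≤ _ := hX.comap_le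
  have hιint : Integrable ι P :=
    Integrable.mono' (integrable_const 1) hι.aestronglyMeasurable
      (Filter.Eventually.of_forall fun ω => by
        rw [Real.norm_eq_abs, abs_of_nonneg (hι0 ω)]; exact hι1 ω)
  have hwint : Integrable (fun ω => w (X ω)) P := integrable_condExp.congr hver.symm
  have hset : ∀ A : Set 𝓧, MeasurableSet A →
      ∫⁻ ω in X ⁻¹' A, ENNReal.ofReal (w (X ω)) ∂P
        = ∫⁻ ω in X ⁻¹' A, ENNReal.ofReal (ι ω) ∂P := by
    intro A hA
    have hsm : MeasurableSet (X ⁻¹' A) := hX hA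
    have hs : MeasurableSet[MeasurableSpace.comap X inferInstance] (X ⁻¹' A) := ⟨A, hA, rfl⟩
    have h1 : ∫ ω in X ⁻¹' A, w (X ω) ∂P = ∫ ω in X ⁻¹' A, ι ω ∂P := by
      rw [setIntegral_congr_ae hsm (hver.mono fun ω h _ => h)]
      exact setIntegral_condExp hm hιint hs
    rw [← ofReal_integral_eq_lintegral_ofReal hwint.restrict (ae_restrict_of_ae hw0),
        ← ofReal_integral_eq_lintegral_ofReal hιint.restrict
          (ae_restrict_of_ae (Filter.Eventually.of_forall hι0)), h1]
  have hmw : Measurable fun ω => ENNReal.ofReal (w (X ω)) := (hw.comp hX).ennreal_ofReal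
  have hmι : Measurable fun ω => ENNReal.ofReal (ι ω) := hι.ennreal_ofReal
  have hmap : (P.withDensity fun ω => ENNReal.ofReal (w (X ω))).map X
      = (P.withDensity fun ω => ENNReal.ofReal (ι ω)).map X := by
    ext A hA
    rw [Measure.map_apply hX hA, Measure.map_apply hX hA,
      withDensity_apply _ (hX hA), withDensity_apply _ (hX hA)]
    exact hset A hA
  intro h hh
  calc ∫⁻ ω, h (X ω) * ENNReal.ofReal (w (X ω)) ∂P
      = ∫⁻ ω, (ENNReal.ofReal (w (X ω))) * h (X ω) ∂P := by simp_rw [mul_comm]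
    _ = ∫⁻ ω, h (X ω) ∂(P.withDensity fun ω => ENNReal.ofReal (w (X ω))) :=
        (lintegral_withDensity_eq_lintegral_mul P hmw (hh.comp hX)).symm
    _ = ∫⁻ x, h x ∂((P.withDensity fun ω => ENNReal.ofReal (w (X ω))).map X) :=
        (lintegral_map hh hX).symm
    _ = ∫⁻ x, h x ∂((P.withDensity fun ω => ENNReal.ofReal (ι ω)).map X) := by rw [hmap]
    _ = ∫⁻ ω, h (X ω) ∂(P.withDensity fun ω => ENNReal.ofReal (ι ω)) := lintegral_map hh hX
    _ = ∫⁻ ω, (ENNReal.ofReal (ι ω)) * h (X ω) ∂P :=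
        lintegral_withDensity_eq_lintegral_mul P hmι (hh.comp hX)
    _ = ∫⁻ ω, h (X ω) * ENNReal.ofReal (ι ω) ∂P := by simp_rw [mul_comm]

private lemma key {Ω 𝓧 : Type*} [MeasurableSpace Ω] [MeasurableSpace 𝓧]
    (P : Measure Ω) [IsProbabilityMeasure P]
    (X : Ω → 𝓧) (hX : Measurable X)
    (ε₁ : ℝ) (hε0 : 0 < ε₁) (hε1 : ε₁ < 1)
    (I dy g : Ω → ℝ) (w f : 𝓧 → ℝ)
    (hI : Measurable I) (hdy : Measurable dy) (hw : Measurable w)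
    (hf : Measurable f) (hg : Measurable g)
    (hI01 : ∀ ω, I ω = 0 ∨ I ω = 1)
    (hover : ∀ᵐ ω ∂P, ε₁ ≤ w (X ω))
    (hdy1 : ∀ ω, |dy ω| ≤ 1)
    (hfg : ∀ ω, I ω = 1 → f (X ω) = g ω)
    (hgsq : ∫ ω, g ω ^ 2 ∂P ≤ ∫ ω, dy ω ^ 2 ∂P)
    (hgbdd : ∀ᵐ ω ∂P, |g ω| ≤ 1)
    (hpull : ∀ h : 𝓧 → ℝ≥0∞, Measurable h →
      ∫⁻ ω, h (X ω) * ENNReal.ofReal (w (X ω)) ∂P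
        = ∫⁻ ω, h (X ω) * ENNReal.ofReal (I ω) ∂P) :
    eLpNorm (fun ω => I ω / w (X ω) * dy ω + (1 - I ω / w (X ω)) * f (X ω)) 2 P
      ≤ ENNReal.ofReal (1/ε₁ + (1+ε₁)/ε₁) * eLpNorm dy 2 P := by
  have hinv0 : (0:ℝ) ≤ ε₁⁻¹ := (inv_pos.mpr hε0).le
  have hinv1 : (1:ℝ) ≤ ε₁⁻¹ := by
    have h := mul_inv_cancel₀ (ne_of_gt hε0)
    nlinarith [inv_pos.mpr hε0]
  have hwX : Measurable fun ω => w (X ω) := hw.comp hX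
  have hfX : Measurable fun ω => f (X ω) := hf.comp hX
  -- basic integrabilities
  have hdy2int : Integrable (fun ω => dy ω ^ 2) P :=
    Integrable.mono' (integrable_const 1) ((hdy.pow_const 2).aestronglyMeasurable)
      (Filter.Eventually.of_forall fun ω => by
        rw [Real.norm_eq_abs, abs_of_nonneg (sq_nonneg _)]
        nlinarith [hdy1 ω, abs_nonneg (dy ω), sq_abs (dy ω)])
  have hg2int : Integrable (fun ω => g ω ^ 2) P :=
    Integrable.mono' (integrable_const 1) ((hg.pow_const 2).aestronglyMeasurable)
      (hgbdd.mono fun ω h => by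
        rw [Real.norm_eq_abs, abs_of_nonneg (sq_nonneg _)]
        nlinarith [abs_nonneg (g ω), sq_abs (g ω)])
  set R : ℝ := ∫ ω, dy ω ^ 2 ∂P with hRdef
  have hR0 : 0 ≤ R := integral_nonneg fun ω => sq_nonneg _
  -- the two pull-out identities
  have hE1 : ∫⁻ ω, ENNReal.ofReal (f (X ω) ^ 2) ∂P
      = ∫⁻ ω, ENNReal.ofReal (f (X ω) ^ 2 * I ω / w (X ω)) ∂P := by
    have hmeas : Measurable fun x => ENNReal.ofReal (f x ^ 2 / w x) :=
      ((hf.pow_const 2).div hw).ennreal_ofReal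
    have ha : (fun ω => ENNReal.ofReal (f (X ω) ^ 2 / w (X ω))
          * ENNReal.ofReal (w (X ω)))
        =ᵐ[P] fun ω => ENNReal.ofReal (f (X ω) ^ 2) := by
      filter_upwards [hover] with ω hw1
      have hwpos : 0 < w (X ω) := lt_of_lt_of_le hε0 hw1
      rw [← ENNReal.ofReal_mul (div_nonneg (sq_nonneg _) hwpos.le),
        div_mul_cancel₀ _ (ne_of_gt hwpos)]
    have hb : ∀ ω, ENNReal.ofReal (f (X ω) ^ 2 / w (X ω)) * ENNReal.ofReal (I ω)
        = ENNReal.ofReal (f (X ω) ^ 2 * I ω / w (X ω)) := by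
      intro ω
      rcases hI01 ω with h0 | h1
      · simp [h0]
      · simp [h1]
    rw [← lintegral_congr_ae ha, hpull _ hmeas, lintegral_congr hb]
  have hE2 : ∫⁻ ω, ENNReal.ofReal (f (X ω) ^ 2 / w (X ω)) ∂P
      = ∫⁻ ω, ENNReal.ofReal (f (X ω) ^ 2 * I ω / w (X ω) ^ 2) ∂P := by
    have hmeas : Measurable fun x => ENNReal.ofReal (f x ^ 2 / w x ^ 2) :=
      ((hf.pow_const 2).div (hw.pow_const 2)).ennreal_ofReal
    have ha : (fun ω => ENNReal.ofReal (f (X ω) ^ 2 / w (X ω) ^ 2)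
          * ENNReal.ofReal (w (X ω)))
        =ᵐ[P] fun ω => ENNReal.ofReal (f (X ω) ^ 2 / w (X ω)) := by
      filter_upwards [hover] with ω hw1
      have hwpos : 0 < w (X ω) := lt_of_lt_of_le hε0 hw1
      rw [← ENNReal.ofReal_mul (div_nonneg (sq_nonneg _) (sq_nonneg _))]
      congr 1
      field_simp
    have hb : ∀ ω, ENNReal.ofReal (f (X ω) ^ 2 / w (X ω) ^ 2) * ENNReal.ofReal (I ω)
        = ENNReal.ofReal (f (X ω) ^ 2 * I ω / w (X ω) ^ 2) := by
      intro ω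
      rcases hI01 ω with h0 | h1
      · simp [h0]
      · simp [h1]
    rw [← lintegral_congr_ae ha, hpull _ hmeas, lintegral_congr hb]
  -- bound on S = ∫⁻ ofReal (f(X)²)
  have hIstep : ∀ᵐ ω ∂P, ENNReal.ofReal (f (X ω) ^ 2 * I ω / w (X ω))
      ≤ ENNReal.ofReal (ε₁⁻¹ * g ω ^ 2) := by
    filter_upwards [hover] with ω hw1
    rcases hI01 ω with h0 | h1
    · simp [h0]
    · rw [hfg ω h1, h1, mul_one]
      apply ENNReal.ofReal_le_ofReal
      rw [← div_eq_inv_mul]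
      gcongr
  have hS_le : ∫⁻ ω, ENNReal.ofReal (f (X ω) ^ 2) ∂P ≤ ENNReal.ofReal (ε₁⁻¹ * R) := by
    rw [hE1]
    calc ∫⁻ ω, ENNReal.ofReal (f (X ω) ^ 2 * I ω / w (X ω)) ∂P
        ≤ ∫⁻ ω, ENNReal.ofReal (ε₁⁻¹ * g ω ^ 2) ∂P := lintegral_mono_ae hIstep
      _ = ENNReal.ofReal (∫ ω, ε₁⁻¹ * g ω ^ 2 ∂P) :=
          (ofReal_integral_eq_lintegral_ofReal (hg2int.const_mul _)
            (Filter.Eventually.of_forall fun ω =>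
              mul_nonneg hinv0 (sq_nonneg _))).symm
      _ ≤ ENNReal.ofReal (ε₁⁻¹ * R) := by
          apply ENNReal.ofReal_le_ofReal
          rw [integral_const_mul]
          exact mul_le_mul_of_nonneg_left hgsq hinv0
  have hf2int : Integrable (fun ω => f (X ω) ^ 2) P := by
    refine ⟨(hfX.pow_const 2).aestronglyMeasurable, ?_⟩
    rw [hasFiniteIntegral_iff_ofReal (Filter.Eventually.of_forall fun ω => sq_nonneg _)]
    exact lt_of_le_of_lt hS_le ENNReal.ofReal_lt_top
  set A : ℝ := ∫ ω, f (X ω) ^ 2 ∂P with hAdef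
  have hA0 : 0 ≤ A := integral_nonneg fun ω => sq_nonneg _
  have hAS : ENNReal.ofReal A = ∫⁻ ω, ENNReal.ofReal (f (X ω) ^ 2) ∂P :=
    ofReal_integral_eq_lintegral_ofReal hf2int
      (Filter.Eventually.of_forall fun ω => sq_nonneg _)
  have hA_le : A ≤ ε₁⁻¹ * R := by
    have := hAS ▸ hS_le
    exact (ENNReal.ofReal_le_ofReal_iff (mul_nonneg hinv0 hR0)).mp this
  -- qB and qC
  have hqBint : Integrable (fun ω => f (X ω) ^ 2 * I ω / w (X ω)) P := by
    refine Integrable.mono' (hf2int.const_mul ε₁⁻¹)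
      (((hfX.pow_const 2).mul hI).div hwX).aestronglyMeasurable ?_
    filter_upwards [hover] with ω hw1
    have hwpos : 0 < w (X ω) := lt_of_lt_of_le hε0 hw1
    rcases hI01 ω with h0 | h1
    · simp only [h0, mul_zero, zero_div, norm_zero]
      exact mul_nonneg hinv0 (sq_nonneg _)
    · rw [h1, mul_one, Real.norm_eq_abs, abs_of_nonneg (div_nonneg (sq_nonneg _) hwpos.le),
        ← div_eq_inv_mul]
      gcongr
  have hqCint : Integrable (fun ω => f (X ω) ^ 2 * I ω / w (X ω) ^ 2) P := by
    refine Integrable.mono' (hf2int.const_mul (ε₁⁻¹ ^ 2))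
      (((hfX.pow_const 2).mul hI).div (hwX.pow_const 2)).aestronglyMeasurable ?_
    filter_upwards [hover] with ω hw1
    have hwpos : 0 < w (X ω) := lt_of_lt_of_le hε0 hw1
    rcases hI01 ω with h0 | h1
    · simp only [h0, mul_zero, zero_div, norm_zero]
      exact mul_nonneg (sq_nonneg _) (sq_nonneg _)
    · rw [h1, mul_one, Real.norm_eq_abs,
        abs_of_nonneg (div_nonneg (sq_nonneg _) (sq_nonneg _)),
        show ε₁⁻¹ ^ 2 * f (X ω) ^ 2 = f (X ω) ^ 2 / ε₁ ^ 2 by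
          rw [div_eq_inv_mul, ← inv_pow]]
      gcongr
  set B : ℝ := ∫ ω, f (X ω) ^ 2 * I ω / w (X ω) ∂P with hBdef
  set C : ℝ := ∫ ω, f (X ω) ^ 2 * I ω / w (X ω) ^ 2 ∂P with hCdef
  have hqBnn : ∀ᵐ ω ∂P, 0 ≤ f (X ω) ^ 2 * I ω / w (X ω) := by
    filter_upwards [hover] with ω hw1
    have hwpos : 0 < w (X ω) := lt_of_lt_of_le hε0 hw1
    rcases hI01 ω with h0 | h1
    · simp [h0]
    · rw [h1, mul_one]; positivity
  have hqCnn : ∀ᵐ ω ∂P, 0 ≤ f (X ω) ^ 2 * I ω / w (X ω) ^ 2 := by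
    filter_upwards [] with ω
    rcases hI01 ω with h0 | h1
    · simp [h0]
    · rw [h1, mul_one]; positivity
  have hB0 : 0 ≤ B := integral_nonneg_of_ae hqBnn
  have hBA : B = A := by
    have h1 : ENNReal.ofReal B = ENNReal.ofReal A := by
      rw [hAS, hE1, ofReal_integral_eq_lintegral_ofReal hqBint hqBnn]
    exact (ENNReal.ofReal_eq_ofReal_iff hB0 hA0).mp h1
  have hC_le : C ≤ ε₁⁻¹ * A := by
    have h1 : ENNReal.ofReal C ≤ ENNReal.ofReal (ε₁⁻¹ * A) := by
      rw [ofReal_integral_eq_lintegral_ofReal hqCint hqCnn, ← hE2]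
      calc ∫⁻ ω, ENNReal.ofReal (f (X ω) ^ 2 / w (X ω)) ∂P
          ≤ ∫⁻ ω, ENNReal.ofReal (ε₁⁻¹ * f (X ω) ^ 2) ∂P := by
            apply lintegral_mono_ae
            filter_upwards [hover] with ω hw1
            apply ENNReal.ofReal_le_ofReal
            rw [← div_eq_inv_mul]
            gcongr
        _ = ENNReal.ofReal (∫ ω, ε₁⁻¹ * f (X ω) ^ 2 ∂P) :=
            (ofReal_integral_eq_lintegral_ofReal (hf2int.const_mul _)
              (Filter.Eventually.of_forall fun ω =>
                mul_nonneg hinv0 (sq_nonneg _))).symm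
        _ = ENNReal.ofReal (ε₁⁻¹ * A) := by rw [integral_const_mul]
    exact (ENNReal.ofReal_le_ofReal_iff (mul_nonneg hinv0 hA0)).mp h1
  -- expansion of q²
  have hq2expand : ∀ ω, ((1 - I ω / w (X ω)) * f (X ω)) ^ 2
      = f (X ω) ^ 2 - 2 * (f (X ω) ^ 2 * I ω / w (X ω))
        + f (X ω) ^ 2 * I ω / w (X ω) ^ 2 := by
    intro ω
    rcases hI01 ω with h0 | h1
    · rw [h0]; ring
    · rw [h1]; ring
  have hq2int : Integrable (fun ω => ((1 - I ω / w (X ω)) * f (X ω)) ^ 2) P := by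
    have : (fun ω => ((1 - I ω / w (X ω)) * f (X ω)) ^ 2)
        = fun ω => f (X ω) ^ 2 - 2 * (f (X ω) ^ 2 * I ω / w (X ω))
            + f (X ω) ^ 2 * I ω / w (X ω) ^ 2 := funext hq2expand
    rw [this]
    exact (hf2int.sub (hqBint.const_mul 2)).add hqCint
  have hIq2 : ∫ ω, ((1 - I ω / w (X ω)) * f (X ω)) ^ 2 ∂P = A - 2 * B + C := by
    have : (fun ω => ((1 - I ω / w (X ω)) * f (X ω)) ^ 2)
        = fun ω => f (X ω) ^ 2 - 2 * (f (X ω) ^ 2 * I ω / w (X ω))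
            + f (X ω) ^ 2 * I ω / w (X ω) ^ 2 := funext hq2expand
    have h2B : Integrable (fun ω => 2 * (f (X ω) ^ 2 * I ω / w (X ω))) P :=
      hqBint.const_mul 2
    have h12 : Integrable
        (fun ω => f (X ω) ^ 2 - 2 * (f (X ω) ^ 2 * I ω / w (X ω))) P := hf2int.sub h2B
    rw [this, integral_add h12 hqCint, integral_sub hf2int h2B, integral_const_mul]
  have hq2_le : ∫ ω, ((1 - I ω / w (X ω)) * f (X ω)) ^ 2 ∂P
      ≤ ((ε₁⁻¹ - 1) * ε₁⁻¹) * R := by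
    rw [hIq2, hBA]
    nlinarith [hC_le, hA_le, hA0, hR0, hinv1]
  -- eLpNorm bounds
  have hNdy : eLpNorm dy 2 P = (ENNReal.ofReal R) ^ (1/2 : ℝ) := eLpNorm_two_eq hdy2int
  have hkey2 : eLpNorm (fun ω => (1 - I ω / w (X ω)) * f (X ω)) 2 P
      ≤ ENNReal.ofReal ((1 + ε₁) / ε₁) * eLpNorm dy 2 P := by
    rw [eLpNorm_two_eq hq2int, hNdy]
    have hk0 : (0:ℝ) ≤ (1 + ε₁) / ε₁ := by positivity
    have hck : (ε₁⁻¹ - 1) * ε₁⁻¹ ≤ ((1 + ε₁) / ε₁) ^ 2 := by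
      rw [div_pow, le_div_iff₀ (by positivity : (0:ℝ) < ε₁ ^ 2)]
      have hme : ε₁⁻¹ * ε₁ = 1 := inv_mul_cancel₀ (ne_of_gt hε0)
      nlinarith [hme, hε0, sq_nonneg ε₁, sq_nonneg (ε₁⁻¹*ε₁)]
    calc (ENNReal.ofReal (∫ ω, ((1 - I ω / w (X ω)) * f (X ω)) ^ 2 ∂P)) ^ (1/2:ℝ)
        ≤ (ENNReal.ofReal (((ε₁⁻¹ - 1) * ε₁⁻¹) * R)) ^ (1/2:ℝ) :=
          ENNReal.rpow_le_rpow (ENNReal.ofReal_le_ofReal hq2_le) (by norm_num)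
      _ = (ENNReal.ofReal ((ε₁⁻¹ - 1) * ε₁⁻¹) * ENNReal.ofReal R) ^ (1/2:ℝ) := by
          rw [ENNReal.ofReal_mul (mul_nonneg (by linarith) hinv0)]
      _ = (ENNReal.ofReal ((ε₁⁻¹ - 1) * ε₁⁻¹)) ^ (1/2:ℝ)
            * (ENNReal.ofReal R) ^ (1/2:ℝ) :=
          ENNReal.mul_rpow_of_nonneg _ _ (by norm_num)
      _ ≤ ENNReal.ofReal ((1 + ε₁) / ε₁) * (ENNReal.ofReal R) ^ (1/2:ℝ) := by
          gcongr
          exact sq_ofReal_rpow_half hk0 hck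
  have hkey1 : eLpNorm (fun ω => I ω / w (X ω) * dy ω) 2 P
      ≤ ENNReal.ofReal ε₁⁻¹ * eLpNorm dy 2 P := by
    have h1 : eLpNorm (fun ω => I ω / w (X ω) * dy ω) 2 P
        ≤ eLpNorm (ε₁⁻¹ • dy) 2 P := by
      apply eLpNorm_mono_ae
      filter_upwards [hover] with ω hw1
      have hwpos : 0 < w (X ω) := lt_of_lt_of_le hε0 hw1
      rcases hI01 ω with h0 | h1
      · simp only [h0, zero_div, zero_mul, norm_zero]
        positivity
      · simp only [h1, Pi.smul_apply, smul_eq_mul, Real.norm_eq_abs, abs_mul, one_div]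
        rw [abs_of_nonneg (inv_nonneg.mpr hwpos.le), abs_of_nonneg hinv0]
        gcongr
    rw [eLpNorm_const_smul] at h1
    rwa [Real.enorm_eq_ofReal hinv0] at h1
  -- combine
  have hmq : AEStronglyMeasurable (fun ω => (1 - I ω / w (X ω)) * f (X ω)) P :=
    (((measurable_const.sub (hI.div hwX)).mul hfX)).aestronglyMeasurable
  have hmt : AEStronglyMeasurable (fun ω => I ω / w (X ω) * dy ω) P :=
    ((hI.div hwX).mul hdy).aestronglyMeasurable
  calc eLpNorm (fun ω => I ω / w (X ω) * dy ω + (1 - I ω / w (X ω)) * f (X ω)) 2 P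
      ≤ eLpNorm (fun ω => I ω / w (X ω) * dy ω) 2 P
        + eLpNorm (fun ω => (1 - I ω / w (X ω)) * f (X ω)) 2 P :=
        eLpNorm_add_le hmt hmq one_le_two
    _ ≤ ENNReal.ofReal ε₁⁻¹ * eLpNorm dy 2 P
        + ENNReal.ofReal ((1 + ε₁) / ε₁) * eLpNorm dy 2 P := add_le_add hkey1 hkey2
    _ = ENNReal.ofReal (1/ε₁ + (1+ε₁)/ε₁) * eLpNorm dy 2 P := by
        rw [← add_mul, ← ENNReal.ofReal_add hinv0 (by positivity), one_div]

/-- Smoothness of the efficient score in the threshold `a` (case `d = d'`):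
for all thresholds `a, ā ∈ ℝ` and `d ∈ {0,1}`, the `L²(P)` distance between the doubly
robust scores at thresholds `a` and `ā` is at most
`(1/ε₁ + (1+ε₁)/ε₁)·‖Y_a − Y_ā‖_{P,2}`. -/
theorem statement_16
    {Ω 𝓧 : Type*} [MeasurableSpace Ω] [MeasurableSpace 𝓧]
    (P : Measure Ω) [IsProbabilityMeasure P]
    (Y : Ω → ℝ) (D : Ω → ℕ) (X : Ω → 𝓧)
    (hY : Measurable Y) (hD : Measurable D) (hX : Measurable X)
    (hD01 : ∀ ω, D ω ≤ 1)
    (d : ℕ) (hd : d ≤ 1)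
    -- the propensity score with overlap
    (p : ℕ → 𝓧 → ℝ)
    (hpmeas : Measurable (fun t : ℕ × 𝓧 => p t.1 t.2))
    (hpver : ∀ δ ≤ 1, (fun ω => p δ (X ω)) =ᵐ[P]
      P[(fun ω' => if D ω' = δ then (1:ℝ) else 0) | MeasurableSpace.comap X inferInstance])
    (ε₁ : ℝ) (hε₁ : ε₁ ∈ Set.Ioo (0:ℝ) (1/2))
    (hoverp : ∀ δ ≤ 1, ∀ᵐ ω ∂P, ε₁ ≤ p δ (X ω) ∧ p δ (X ω) ≤ 1 - ε₁)
    -- outcome models indexed by the threshold: G_a(D,X) a version of P(Y ≤ a | D, X)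
    (G : ℝ → ℕ → 𝓧 → ℝ)
    (hGmeas : ∀ a : ℝ, Measurable (fun t : ℕ × 𝓧 => G a t.1 t.2))
    (hGver : ∀ a : ℝ, (fun ω => G a (D ω) (X ω)) =ᵐ[P]
      P[(fun ω' => if Y ω' ≤ a then (1:ℝ) else 0) |
        MeasurableSpace.comap (fun ω' => (D ω', X ω')) inferInstance])
    (a abar : ℝ) :
    eLpNorm (fun ω =>
      ((if D ω = d then (1:ℝ) else 0) / p d (X ω)
          * ((if Y ω ≤ a then (1:ℝ) else 0) - G a d (X ω))
        + G a d (X ω))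
      - ((if D ω = d then (1:ℝ) else 0) / p d (X ω)
          * ((if Y ω ≤ abar then (1:ℝ) else 0) - G abar d (X ω))
        + G abar d (X ω))) 2 P
      ≤ ENNReal.ofReal (1 / ε₁ + (1 + ε₁) / ε₁)
        * eLpNorm (fun ω =>
            (if Y ω ≤ a then (1:ℝ) else 0) - (if Y ω ≤ abar then (1:ℝ) else 0)) 2 P := by
  obtain ⟨hε0, hεh⟩ := hε₁
  have hε1 : ε₁ < 1 := hεh.trans (by norm_num)
  -- notation
  have hm : MeasurableSpace.comap (fun ω' => (D ω', X ω')) inferInstance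
      ≤ ‹MeasurableSpace Ω› := (hD.prodMk hX).comap_le
  -- measurability of ingredients
  have hImeas : Measurable (fun ω => if D ω = d then (1:ℝ) else 0) :=
    Measurable.ite (hD (measurableSet_singleton d)) measurable_const measurable_const
  have hYa : Measurable (fun ω => if Y ω ≤ a then (1:ℝ) else 0) :=
    Measurable.ite (hY measurableSet_Iic) measurable_const measurable_const
  have hYb : Measurable (fun ω => if Y ω ≤ abar then (1:ℝ) else 0) :=
    Measurable.ite (hY measurableSet_Iic) measurable_const measurable_const
  have hdymeas : Measurable (fun ω =>
      (if Y ω ≤ a then (1:ℝ) else 0) - (if Y ω ≤ abar then (1:ℝ) else 0)) := hYa.sub hYb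
  have hwmeas : Measurable (fun x => p d x) :=
    hpmeas.comp (measurable_const.prodMk measurable_id)
  have hfmeas : Measurable (fun x => G a d x - G abar d x) :=
    ((hGmeas a).comp (measurable_const.prodMk measurable_id)).sub
      ((hGmeas abar).comp (measurable_const.prodMk measurable_id))
  have hgmeas : Measurable (fun ω => G a (D ω) (X ω) - G abar (D ω) (X ω)) :=
    ((hGmeas a).comp (hD.prodMk hX)).sub ((hGmeas abar).comp (hD.prodMk hX))
  -- integrability of the indicators
  have hYaint : Integrable (fun ω => if Y ω ≤ a then (1:ℝ) else 0) P :=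
    Integrable.mono' (integrable_const 1) hYa.aestronglyMeasurable
      (Filter.Eventually.of_forall fun ω => by split_ifs <;> simp)
  have hYbint : Integrable (fun ω => if Y ω ≤ abar then (1:ℝ) else 0) P :=
    Integrable.mono' (integrable_const 1) hYb.aestronglyMeasurable
      (Filter.Eventually.of_forall fun ω => by split_ifs <;> simp)
  have hdyint : Integrable (fun ω =>
      (if Y ω ≤ a then (1:ℝ) else 0) - (if Y ω ≤ abar then (1:ℝ) else 0)) P :=
    hYaint.sub hYbint
  -- the conditional-expectation identification of g
  have hGae : (fun ω => G a (D ω) (X ω) - G abar (D ω) (X ω)) =ᵐ[P]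
      P[(fun ω => (if Y ω ≤ a then (1:ℝ) else 0) - (if Y ω ≤ abar then (1:ℝ) else 0)) | MeasurableSpace.comap (fun ω' => (D ω', X ω')) inferInstance] := by
    have h1 := hGver a
    have h2 := hGver abar
    have hsub : P[(fun ω => (if Y ω ≤ a then (1:ℝ) else 0)
          - (if Y ω ≤ abar then (1:ℝ) else 0)) | MeasurableSpace.comap (fun ω' => (D ω', X ω')) inferInstance]
        =ᵐ[P] P[(fun ω' => if Y ω' ≤ a then (1:ℝ) else 0) | MeasurableSpace.comap (fun ω' => (D ω', X ω')) inferInstance]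
          - P[(fun ω' => if Y ω' ≤ abar then (1:ℝ) else 0) | MeasurableSpace.comap (fun ω' => (D ω', X ω')) inferInstance] :=
      condExp_sub hYaint hYbint _
    filter_upwards [h1, h2, hsub] with ω e1 e2 e3
    rw [e1, e2]
    rw [e3, Pi.sub_apply]
  -- |E[dy|m]| ≤ E[|dy| | MeasurableSpace.comap (fun ω' => (D ω', X ω')) inferInstance] ≤ 1
  have habs : ∀ᵐ ω ∂P, |(P[(fun ω => (if Y ω ≤ a then (1:ℝ) else 0)
        - (if Y ω ≤ abar then (1:ℝ) else 0)) | MeasurableSpace.comap (fun ω' => (D ω', X ω')) inferInstance]) ω|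
      ≤ (P[(fun ω => |(if Y ω ≤ a then (1:ℝ) else 0)
        - (if Y ω ≤ abar then (1:ℝ) else 0)|) | MeasurableSpace.comap (fun ω' => (D ω', X ω')) inferInstance]) ω := by
    filter_upwards [condExp_mono (m := MeasurableSpace.comap (fun ω' => (D ω', X ω')) inferInstance)
        hdyint hdyint.abs
        (Filter.Eventually.of_forall fun ω => le_abs_self _),
      Filter.EventuallyLE.trans
        (condExp_neg (m := MeasurableSpace.comap (fun ω' => (D ω', X ω')) inferInstance) _).symm.le
        (condExp_mono (m := MeasurableSpace.comap (fun ω' => (D ω', X ω')) inferInstance)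
          hdyint.neg hdyint.abs
          (Filter.Eventually.of_forall fun ω => neg_le_abs _))] with ω h1 h2
    simp only [Pi.neg_apply] at h2
    rw [abs_le]
    exact ⟨by linarith, h1⟩
  have hle1 : ∀ᵐ ω ∂P, (P[(fun ω => |(if Y ω ≤ a then (1:ℝ) else 0)
        - (if Y ω ≤ abar then (1:ℝ) else 0)|) | MeasurableSpace.comap (fun ω' => (D ω', X ω')) inferInstance]) ω ≤ 1 := by
    have hmono := condExp_mono (m := MeasurableSpace.comap (fun ω' => (D ω', X ω')) inferInstance) hdyint.abs (integrable_const (1:ℝ))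
      (Filter.Eventually.of_forall fun ω => by dsimp; split_ifs <;> norm_num)
    filter_upwards [hmono] with ω h1
    rw [condExp_const hm] at h1
    exact h1
  have hgbdd : ∀ᵐ ω ∂P, |G a (D ω) (X ω) - G abar (D ω) (X ω)| ≤ 1 := by
    filter_upwards [hGae, habs, hle1] with ω e h1 h2
    rw [e]
    exact h1.trans h2
  have hg2int : Integrable (fun ω => (G a (D ω) (X ω) - G abar (D ω) (X ω)) ^ 2) P :=
    Integrable.mono' (integrable_const 1) (hgmeas.pow_const 2).aestronglyMeasurable
      (hgbdd.mono fun ω h => by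
        rw [Real.norm_eq_abs, abs_of_nonneg (sq_nonneg _)]
        nlinarith [abs_nonneg (G a (D ω) (X ω) - G abar (D ω) (X ω)),
          sq_abs (G a (D ω) (X ω) - G abar (D ω) (X ω))])
  have hgsq : ∫ ω, (G a (D ω) (X ω) - G abar (D ω) (X ω)) ^ 2 ∂P
      ≤ ∫ ω, ((if Y ω ≤ a then (1:ℝ) else 0) - (if Y ω ≤ abar then (1:ℝ) else 0)) ^ 2 ∂P := by
    have hstep : ∀ᵐ ω ∂P, (G a (D ω) (X ω) - G abar (D ω) (X ω)) ^ 2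
        ≤ (P[(fun ω => |(if Y ω ≤ a then (1:ℝ) else 0)
            - (if Y ω ≤ abar then (1:ℝ) else 0)|) | MeasurableSpace.comap (fun ω' => (D ω', X ω')) inferInstance]) ω := by
      filter_upwards [hGae, habs, hle1] with ω e h1 h2
      have h3 : |G a (D ω) (X ω) - G abar (D ω) (X ω)|
          ≤ (P[(fun ω => |(if Y ω ≤ a then (1:ℝ) else 0)
            - (if Y ω ≤ abar then (1:ℝ) else 0)|) | MeasurableSpace.comap (fun ω' => (D ω', X ω')) inferInstance]) ω := by rw [e]; exact h1
      nlinarith [sq_abs (G a (D ω) (X ω) - G abar (D ω) (X ω)),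
        abs_nonneg (G a (D ω) (X ω) - G abar (D ω) (X ω))]
    calc ∫ ω, (G a (D ω) (X ω) - G abar (D ω) (X ω)) ^ 2 ∂P
        ≤ ∫ ω, (P[(fun ω => |(if Y ω ≤ a then (1:ℝ) else 0)
            - (if Y ω ≤ abar then (1:ℝ) else 0)|) | MeasurableSpace.comap (fun ω' => (D ω', X ω')) inferInstance]) ω ∂P :=
          integral_mono_ae hg2int integrable_condExp hstep
      _ = ∫ ω, |(if Y ω ≤ a then (1:ℝ) else 0) - (if Y ω ≤ abar then (1:ℝ) else 0)| ∂P :=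
          integral_condExp hm
      _ = ∫ ω, ((if Y ω ≤ a then (1:ℝ) else 0) - (if Y ω ≤ abar then (1:ℝ) else 0)) ^ 2 ∂P := by
          apply integral_congr_ae
          filter_upwards [] with ω
          split_ifs <;> norm_num
  -- the pull-out property
  have hw0 : ∀ᵐ ω ∂P, 0 ≤ p d (X ω) :=
    (hoverp d hd).mono fun ω h => le_trans hε0.le h.1
  have hpull := pullout hX hwmeas hImeas
    (fun ω => by split_ifs <;> norm_num)
    (fun ω => by split_ifs <;> norm_num)
    (hpver d hd) hw0
  -- rewrite the goal and apply `key`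
  have hgoal : (fun ω =>
      ((if D ω = d then (1:ℝ) else 0) / p d (X ω)
          * ((if Y ω ≤ a then (1:ℝ) else 0) - G a d (X ω))
        + G a d (X ω))
      - ((if D ω = d then (1:ℝ) else 0) / p d (X ω)
          * ((if Y ω ≤ abar then (1:ℝ) else 0) - G abar d (X ω))
        + G abar d (X ω)))
      = fun ω => (if D ω = d then (1:ℝ) else 0) / p d (X ω)
          * ((if Y ω ≤ a then (1:ℝ) else 0) - (if Y ω ≤ abar then (1:ℝ) else 0))
        + (1 - (if D ω = d then (1:ℝ) else 0) / p d (X ω))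
          * (G a d (X ω) - G abar d (X ω)) := by
    funext ω
    ring
  rw [hgoal]
  exact key P X hX ε₁ hε0 hε1
    (fun ω => if D ω = d then (1:ℝ) else 0)
    (fun ω => (if Y ω ≤ a then (1:ℝ) else 0) - (if Y ω ≤ abar then (1:ℝ) else 0))
    (fun ω => G a (D ω) (X ω) - G abar (D ω) (X ω))
    (fun x => p d x) (fun x => G a d x - G abar d x)
    hImeas hdymeas hwmeas hfmeas hgmeas
    (fun ω => by split_ifs <;> simp)
    ((hoverp d hd).mono fun ω h => h.1)
    (fun ω => by split_ifs <;> norm_num)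
    (fun ω h1 => by
      by_cases h : D ω = d
      · rw [h]
      · simp [h] at h1)
    hgsq hgbdd hpull
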